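/- Let h be a random variable taking values in (0,∞) with E[h] < ∞, let σ_N² > 0 and P_M, J_M > 0. Let P and J be nonnegative random variables, with h, P, J mutually independent, satisfying E[P] ≤ P_M and E[J] ≤ J_M. Then E[ log(1 + h·P/(J_M + σ_N²)) ] ≤ E[ log(1 + h·P_M/(J_M + σ_N²)) ] ≤ E[ log(1 + h·P_M/(J + σ_N²)) ]. In particular, the deterministic (uniform) allocations P ≡ P_M and J ≡ J_M form a Nash equilibrium of the intra-frame power-allocation game without channel-state feedback. -/

import Mathlib

open MeasureTheory ProbabilityTheory

/-- Tangent-line bound for the concave function `log (1 + ·)`. -/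
lemma log_tangent_le {u v : ℝ} (hu : 0 ≤ u) (hv : 0 ≤ v) :
    Real.log (1 + v) ≤ Real.log (1 + u) + (v - u) / (1 + u) := by
  have h1 : (0:ℝ) < 1 + u := by linarith
  have h2 : (0:ℝ) < 1 + v := by linarith
  have key := Real.log_le_sub_one_of_pos (show 0 < (1 + v) / (1 + u) by positivity)
  rw [Real.log_div (by linarith) (by linarith)] at key
  have e : (1 + v) / (1 + u) - 1 = (v - u) / (1 + u) := by field_simp; ring
  linarith [e ▸ key]

/-- Tangent-line bound for the convex function `t ↦ log(1 + a/t)` in the form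
`log((B+a)/B) - a (A-B) / ((B+a) B) ≤ log((A+a)/A)`. -/
lemma log_tangent_ge {a A B : ℝ} (ha : 0 < a) (hA : 0 < A) (hB : 0 < B) :
    Real.log ((B + a) / B) - a * (A - B) / ((B + a) * B) ≤ Real.log ((A + a) / A) := by
  have hBa : (0:ℝ) < B + a := by linarith
  have hAa : (0:ℝ) < A + a := by linarith
  have key := Real.log_le_sub_one_of_pos (show 0 < ((B + a) * A) / ((A + a) * B) by positivity)
  have hlog : Real.log (((B + a) * A) / ((A + a) * B))
      = (Real.log ((B + a) / B)) - Real.log ((A + a) / A) := by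
    rw [Real.log_div (by positivity) (by positivity), Real.log_mul (by positivity) (by positivity),
      Real.log_mul (by positivity) (by positivity),
      Real.log_div (by positivity) (by positivity), Real.log_div (by positivity) (by positivity)]
    ring
  rw [hlog] at key
  -- key : log((B+a)/B) - log((A+a)/A) ≤ (B+a)*A/((A+a)*B) - 1
  have arith : ((B + a) * A) / ((A + a) * B) - 1 ≤ a * (A - B) / ((B + a) * B) := by
    rw [div_sub_one (by positivity), div_le_div_iff₀ (by positivity) (by positivity)]
    nlinarith [mul_nonneg ha.le (sq_nonneg (A - B)), sq_nonneg (A - B)]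
  linarith

/-- without channel-state feedback, for mutually independent `h`, `P`, `J`
with `E[P] ≤ P_M`, `E[J] ≤ J_M`, the deterministic allocations `P ≡ P_M`, `J ≡ J_M`
form a Nash equilibrium of the intra-frame game:
`E[log(1 + hP/(J_M + σ²))] ≤ E[log(1 + hP_M/(J_M + σ²))] ≤ E[log(1 + hP_M/(J + σ²))]`. -/
theorem stmt16
    {Ω : Type*} [MeasurableSpace Ω] (μ : Measure Ω) [IsProbabilityMeasure μ]
    (h P J : Ω → ℝ)
    (hh_meas : Measurable h) (hP_meas : Measurable P) (hJ_meas : Measurable J)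
    (hh_pos : ∀ ω, 0 < h ω) (hh_int : Integrable h μ)
    (hP_nonneg : ∀ ω, 0 ≤ P ω) (hJ_nonneg : ∀ ω, 0 ≤ J ω)
    (hP_int : Integrable P μ) (hJ_int : Integrable J μ)
    (σ : ℝ) (hσ : 0 < σ) (PM JM : ℝ) (hPM : 0 < PM) (hJM : 0 < JM)
    (hEP : (∫ ω, P ω ∂μ) ≤ PM) (hEJ : (∫ ω, J ω ∂μ) ≤ JM)
    -- `h`, `P`, `J` are mutually independent
    (hindep : iIndepFun (m := fun _ : Fin 3 => (inferInstance : MeasurableSpace ℝ))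
      ![h, P, J] μ) :
    (∫ ω, Real.log (1 + h ω * P ω / (JM + σ)) ∂μ) ≤
      (∫ ω, Real.log (1 + h ω * PM / (JM + σ)) ∂μ) ∧
    (∫ ω, Real.log (1 + h ω * PM / (JM + σ)) ∂μ) ≤
      (∫ ω, Real.log (1 + h ω * PM / (J ω + σ)) ∂μ) := by
  have hc : (0:ℝ) < JM + σ := by linarith
  -- independence of the pairs
  have hhP : IndepFun h P μ := by
    simpa using hindep.indepFun (show (0 : Fin 3) ≠ 1 by decide)
  have hhJ : IndepFun h J μ := by
    simpa using hindep.indepFun (show (0 : Fin 3) ≠ 2 by decide)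
  -- integrability of the three log integrands
  have mlog1 : Measurable fun ω => Real.log (1 + h ω * P ω / (JM + σ)) :=
    Real.measurable_log.comp (by fun_prop)
  have mlog2 : Measurable fun ω => Real.log (1 + h ω * PM / (JM + σ)) :=
    Real.measurable_log.comp (by fun_prop)
  have mlog3 : Measurable fun ω => Real.log (1 + h ω * PM / (J ω + σ)) :=
    Real.measurable_log.comp (by fun_prop)
  have hhPmul : Integrable (fun ω => h ω * P ω) μ := hhP.integrable_mul hh_int hP_int
  have log_bound : ∀ {x : ℝ}, 0 ≤ x → |Real.log (1 + x)| ≤ x := by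
    intro x hx
    rw [abs_of_nonneg (Real.log_nonneg (by linarith))]
    have := Real.log_le_sub_one_of_pos (show (0:ℝ) < 1 + x by linarith)
    linarith
  have ilog1 : Integrable (fun ω => Real.log (1 + h ω * P ω / (JM + σ))) μ := by
    refine (hhPmul.div_const (JM + σ)).mono mlog1.aestronglyMeasurable ?_
    filter_upwards with ω
    have hx : 0 ≤ h ω * P ω / (JM + σ) :=
      div_nonneg (mul_nonneg (hh_pos ω).le (hP_nonneg ω)) (by linarith)
    calc ‖Real.log (1 + h ω * P ω / (JM + σ))‖ ≤ h ω * P ω / (JM + σ) := log_bound hx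
      _ ≤ ‖h ω * P ω / (JM + σ)‖ := le_abs_self _
  have ilog2 : Integrable (fun ω => Real.log (1 + h ω * PM / (JM + σ))) μ := by
    refine ((hh_int.mul_const PM).div_const (JM + σ)).mono mlog2.aestronglyMeasurable ?_
    filter_upwards with ω
    have hx : 0 ≤ h ω * PM / (JM + σ) :=
      div_nonneg (mul_nonneg (hh_pos ω).le hPM.le) (by linarith)
    calc ‖Real.log (1 + h ω * PM / (JM + σ))‖ ≤ h ω * PM / (JM + σ) := log_bound hx
      _ ≤ ‖h ω * PM / (JM + σ)‖ := le_abs_self _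
  have ilog3 : Integrable (fun ω => Real.log (1 + h ω * PM / (J ω + σ))) μ := by
    refine ((hh_int.mul_const PM).div_const σ).mono mlog3.aestronglyMeasurable ?_
    filter_upwards with ω
    have hJσ : (0:ℝ) < J ω + σ := by have := hJ_nonneg ω; linarith
    have hx : 0 ≤ h ω * PM / (J ω + σ) :=
      div_nonneg (mul_nonneg (hh_pos ω).le hPM.le) hJσ.le
    have hle : h ω * PM / (J ω + σ) ≤ h ω * PM / σ := by
      exact div_le_div_of_nonneg_left (mul_nonneg (hh_pos ω).le hPM.le) hσ (by linarith [hJ_nonneg ω])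
    calc ‖Real.log (1 + h ω * PM / (J ω + σ))‖ ≤ h ω * PM / (J ω + σ) := log_bound hx
      _ ≤ h ω * PM / σ := hle
      _ ≤ ‖h ω * PM / σ‖ := le_abs_self _
  constructor
  · -- FIRST INEQUALITY
    set φ : ℝ → ℝ := fun x => x / ((JM + σ) + x * PM) with hφ
    have mφ : Measurable φ := measurable_id.div (by fun_prop)
    have φ_nonneg : ∀ ω, 0 ≤ φ (h ω) := by
      intro ω
      have := (hh_pos ω).le
      have : (0:ℝ) < (JM + σ) + h ω * PM := by nlinarith [hh_pos ω]
      positivity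
    have φ_bdd : ∀ ω, ‖φ (h ω)‖ ≤ 1 / PM := by
      intro ω
      have hhw := hh_pos ω
      have hden : (0:ℝ) < (JM + σ) + h ω * PM := by nlinarith
      rw [Real.norm_eq_abs, abs_of_nonneg (φ_nonneg ω)]
      rw [hφ, div_le_div_iff₀ hden hPM]
      nlinarith
    -- pointwise inequality
    have ptwise : ∀ ω, Real.log (1 + h ω * P ω / (JM + σ)) ≤
        Real.log (1 + h ω * PM / (JM + σ)) + φ (h ω) * (P ω - PM) := by
      intro ω
      have hhw := hh_pos ω
      have hPw := hP_nonneg ω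
      have key := log_tangent_le (u := h ω * PM / (JM + σ)) (v := h ω * P ω / (JM + σ))
        (by positivity) (by positivity)
      have hden : (0:ℝ) < (JM + σ) + h ω * PM := by nlinarith
      have e : (h ω * P ω / (JM + σ) - h ω * PM / (JM + σ)) / (1 + h ω * PM / (JM + σ))
          = φ (h ω) * (P ω - PM) := by
        rw [hφ]; field_simp
      rw [e] at key
      exact key
    -- integrability of correction term
    have icorr : Integrable (fun ω => φ (h ω) * (P ω - PM)) μ := by
      exact (hP_int.sub (integrable_const PM)).bdd_mul
        ((mφ.comp hh_meas).aestronglyMeasurable) (ae_of_all _ φ_bdd)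
    have iφh : Integrable (fun ω => φ (h ω)) μ := by
      refine (integrable_const (1 / PM)).mono'
        ((mφ.comp hh_meas).aestronglyMeasurable) ?_
      filter_upwards with ω
      simpa using φ_bdd ω
    have iφhP : Integrable (fun ω => φ (h ω) * P ω) μ :=
      hP_int.bdd_mul ((mφ.comp hh_meas).aestronglyMeasurable) (ae_of_all _ φ_bdd)
    -- correction term is nonpositive
    have hindep_φP : IndepFun (fun ω => φ (h ω)) P μ := hhP.comp mφ measurable_id
    have factor : (∫ ω, φ (h ω) * P ω ∂μ) = (∫ ω, φ (h ω) ∂μ) * (∫ ω, P ω ∂μ) :=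
      hindep_φP.integral_mul_eq_mul_integral ((mφ.comp hh_meas).aestronglyMeasurable)
        hP_meas.aestronglyMeasurable
    have hEφ : 0 ≤ ∫ ω, φ (h ω) ∂μ := integral_nonneg φ_nonneg
    have corr_nonpos : (∫ ω, φ (h ω) * (P ω - PM) ∂μ) ≤ 0 := by
      have expand : (∫ ω, φ (h ω) * (P ω - PM) ∂μ)
          = (∫ ω, φ (h ω) * P ω ∂μ) - PM * (∫ ω, φ (h ω) ∂μ) := by
        rw [show (fun ω => φ (h ω) * (P ω - PM)) =
            (fun ω => φ (h ω) * P ω - PM * φ (h ω)) by funext ω; ring,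
          integral_sub iφhP (iφh.const_mul PM), integral_const_mul]
      rw [expand, factor]
      nlinarith [mul_le_mul_of_nonneg_left hEP hEφ]
    calc (∫ ω, Real.log (1 + h ω * P ω / (JM + σ)) ∂μ)
        ≤ ∫ ω, (Real.log (1 + h ω * PM / (JM + σ)) + φ (h ω) * (P ω - PM)) ∂μ :=
          integral_mono ilog1 (ilog2.add icorr) ptwise
      _ = (∫ ω, Real.log (1 + h ω * PM / (JM + σ)) ∂μ) + ∫ ω, φ (h ω) * (P ω - PM) ∂μ :=
          integral_add ilog2 icorr
      _ ≤ (∫ ω, Real.log (1 + h ω * PM / (JM + σ)) ∂μ) := by linarith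
  · -- SECOND INEQUALITY
    set ψ : ℝ → ℝ := fun x => x * PM / (((JM + σ) + x * PM) * (JM + σ)) with hψ
    have mψ : Measurable ψ := (measurable_id.mul_const PM).div (by fun_prop)
    have ψ_nonneg : ∀ ω, 0 ≤ ψ (h ω) := by
      intro ω
      have hhw := hh_pos ω
      have : (0:ℝ) < (JM + σ) + h ω * PM := by nlinarith
      positivity
    have ψ_bdd : ∀ ω, ‖ψ (h ω)‖ ≤ 1 / (JM + σ) := by
      intro ω
      have hhw := hh_pos ω
      have hden : (0:ℝ) < (JM + σ) + h ω * PM := by nlinarith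
      rw [Real.norm_eq_abs, abs_of_nonneg (ψ_nonneg ω)]
      rw [hψ, div_le_div_iff₀ (by positivity) hc]
      nlinarith
    have ptwise : ∀ ω, Real.log (1 + h ω * PM / (JM + σ)) ≤
        Real.log (1 + h ω * PM / (J ω + σ)) + ψ (h ω) * (J ω - JM) := by
      intro ω
      have hhw := hh_pos ω
      have hJw := hJ_nonneg ω
      have hA : (0:ℝ) < J ω + σ := by linarith
      have ha : (0:ℝ) < h ω * PM := by positivity
      have key := log_tangent_ge (a := h ω * PM) (A := J ω + σ) (B := JM + σ) ha hA hc
      have e1 : (1 : ℝ) + h ω * PM / (JM + σ) = ((JM + σ) + h ω * PM) / (JM + σ) := by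
        field_simp
      have e2 : (1 : ℝ) + h ω * PM / (J ω + σ) = ((J ω + σ) + h ω * PM) / (J ω + σ) := by
        field_simp
      have e3 : h ω * PM * ((J ω + σ) - (JM + σ)) / (((JM + σ) + h ω * PM) * (JM + σ))
          = ψ (h ω) * (J ω - JM) := by
        rw [hψ]; ring
      rw [e1, e2]
      calc Real.log (((JM + σ) + h ω * PM) / (JM + σ))
          ≤ Real.log (((J ω + σ) + h ω * PM) / (J ω + σ))
            + h ω * PM * ((J ω + σ) - (JM + σ)) / (((JM + σ) + h ω * PM) * (JM + σ)) := by
            have := key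
            -- key : log((B+a)/B) - a*(A-B)/((B+a)*B) ≤ log((A+a)/A)
            have key' : Real.log (((JM + σ) + h ω * PM) / (JM + σ))
                - h ω * PM * ((J ω + σ) - (JM + σ)) / (((JM + σ) + h ω * PM) * (JM + σ))
                ≤ Real.log (((J ω + σ) + h ω * PM) / (J ω + σ)) := by
              convert key using 3 <;> ring
            linarith
        _ = Real.log (((J ω + σ) + h ω * PM) / (J ω + σ)) + ψ (h ω) * (J ω - JM) := by
            rw [e3]
    have icorr : Integrable (fun ω => ψ (h ω) * (J ω - JM)) μ :=
      (hJ_int.sub (integrable_const JM)).bdd_mul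
        ((mψ.comp hh_meas).aestronglyMeasurable) (ae_of_all _ ψ_bdd)
    have iψh : Integrable (fun ω => ψ (h ω)) μ := by
      refine (integrable_const (1 / (JM + σ))).mono'
        ((mψ.comp hh_meas).aestronglyMeasurable) ?_
      filter_upwards with ω
      simpa using ψ_bdd ω
    have iψhJ : Integrable (fun ω => ψ (h ω) * J ω) μ :=
      hJ_int.bdd_mul ((mψ.comp hh_meas).aestronglyMeasurable) (ae_of_all _ ψ_bdd)
    have hindep_ψJ : IndepFun (fun ω => ψ (h ω)) J μ := hhJ.comp mψ measurable_id
    have factor : (∫ ω, ψ (h ω) * J ω ∂μ) = (∫ ω, ψ (h ω) ∂μ) * (∫ ω, J ω ∂μ) :=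
      hindep_ψJ.integral_mul_eq_mul_integral ((mψ.comp hh_meas).aestronglyMeasurable)
        hJ_meas.aestronglyMeasurable
    have hEψ : 0 ≤ ∫ ω, ψ (h ω) ∂μ := integral_nonneg ψ_nonneg
    have corr_nonpos : (∫ ω, ψ (h ω) * (J ω - JM) ∂μ) ≤ 0 := by
      have expand : (∫ ω, ψ (h ω) * (J ω - JM) ∂μ)
          = (∫ ω, ψ (h ω) * J ω ∂μ) - JM * (∫ ω, ψ (h ω) ∂μ) := by
        rw [show (fun ω => ψ (h ω) * (J ω - JM)) =
            (fun ω => ψ (h ω) * J ω - JM * ψ (h ω)) by funext ω; ring,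
          integral_sub iψhJ (iψh.const_mul JM), integral_const_mul]
      rw [expand, factor]
      nlinarith [mul_le_mul_of_nonneg_left hEJ hEψ]
    calc (∫ ω, Real.log (1 + h ω * PM / (JM + σ)) ∂μ)
        ≤ ∫ ω, (Real.log (1 + h ω * PM / (J ω + σ)) + ψ (h ω) * (J ω - JM)) ∂μ :=
          integral_mono ilog2 (ilog3.add icorr) ptwise
      _ = (∫ ω, Real.log (1 + h ω * PM / (J ω + σ)) ∂μ) + ∫ ω, ψ (h ω) * (J ω - JM) ∂μ :=
          integral_add ilog3 icorr
      _ ≤ (∫ ω, Real.log (1 + h ω * PM / (J ω + σ)) ∂μ) := by linarith
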